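/- Let δ ∈ (0,1), B ∈ (0,1), and F > 1/(2B) be given, and run Subgradient Descent from x̂⁰ ∈ Q with step-sizes α_j := δ(f(x̂⁰) − f_slb)/(F‖g_j‖²) (with α_j := 0 if g_j = 0), where every chosen subgradient satisfies ‖g_j‖ ≤ M. Define δ' := δ/(1−δ) and W := ⌊ F M² G² / (2δ²(B − 1/(2F))) ⌋. Then either (f_b^W − f*)/(f* − f_slb) ≤ δ', or f_b^W − f_slb ≤ B·(f(x̂⁰) − f_slb), or both. -/

import Mathlib

open scoped RealInnerProductSpace Classical

/-- `p` is the Euclidean projection of `u` onto `Q`. -/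
def IsProj {n : ℕ} (Q : Set (EuclideanSpace ℝ (Fin n)))
    (u p : EuclideanSpace ℝ (Fin n)) : Prop :=
  p ∈ Q ∧ ∀ w ∈ Q, dist p u ≤ dist w u

lemma aux_nonneg_of (a b : ℝ) (hb : 0 ≤ b)
    (h : ∀ t : ℝ, 0 < t → t ≤ 1 → 0 ≤ 2 * t * a + t ^ 2 * b) : 0 ≤ a := by
  by_contra h'
  push_neg at h'
  rcases eq_or_lt_of_le hb with hb0 | hb0
  · have := h 1 one_pos le_rfl
    nlinarith
  · have ht0 : 0 < min 1 (-a / b) := lt_min one_pos (div_pos (by linarith) hb0)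
    have ht1 : min 1 (-a / b) ≤ 1 := min_le_left _ _
    have h2 := h _ ht0 ht1
    have htb : min 1 (-a / b) ≤ -a / b := min_le_right _ _
    have h3 : min 1 (-a / b) * b ≤ -a := by
      rw [← le_div_iff₀ hb0]; exact htb
    nlinarith

lemma isProj_inner_le {n : ℕ} {Q : Set (EuclideanSpace ℝ (Fin n))} (hQcv : Convex ℝ Q)
    {u p : EuclideanSpace ℝ (Fin n)} (hp : IsProj Q u p)
    {z : EuclideanSpace ℝ (Fin n)} (hz : z ∈ Q) : ⟪u - p, z - p⟫ ≤ 0 := by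
  have key : 0 ≤ ⟪p - u, z - p⟫ := by
    apply aux_nonneg_of _ (‖z - p‖ ^ 2) (by positivity)
    intro t ht0 ht1
    have hmem : p + t • (z - p) ∈ Q := by
      have hc := hQcv hp.1 hz (by linarith : (0:ℝ) ≤ 1 - t) (le_of_lt ht0) (by ring)
      have : (1 - t) • p + t • z = p + t • (z - p) := by module
      rwa [this] at hc
    have hd := hp.2 _ hmem
    rw [dist_eq_norm, dist_eq_norm] at hd
    have hsq : ‖p - u‖ ^ 2 ≤ ‖p + t • (z - p) - u‖ ^ 2 :=
      pow_le_pow_left₀ (norm_nonneg _) hd 2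
    have heq : p + t • (z - p) - u = (p - u) + t • (z - p) := by abel
    rw [heq, norm_add_sq_real, real_inner_smul_right, norm_smul, mul_pow,
      Real.norm_eq_abs, sq_abs] at hsq
    nlinarith
  have hneg : ⟪u - p, z - p⟫ = -⟪p - u, z - p⟫ := by
    rw [show u - p = -(p - u) by abel, inner_neg_left]
  linarith

lemma isProj_norm_le {n : ℕ} {Q : Set (EuclideanSpace ℝ (Fin n))} (hQcv : Convex ℝ Q)
    {u p w : EuclideanSpace ℝ (Fin n)} (hp : IsProj Q u p) (hw : w ∈ Q) :
    ‖p - w‖ ^ 2 ≤ ‖u - w‖ ^ 2 := by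
  have h1 := isProj_inner_le hQcv hp hw
  have heq : u - w = (u - p) + (p - w) := by abel
  rw [heq, norm_add_sq_real]
  have h2 : ⟪u - p, p - w⟫ = -⟪u - p, w - p⟫ := by
    rw [show p - w = -(w - p) by abel, inner_neg_right]
  nlinarith [sq_nonneg ‖u - p‖]

set_option maxHeartbeats 1600000 in
/-- Proposition 2: after `W` iterations of Subgradient Descent with
step-sizes `α_j = δ(f(x̂⁰) − f_slb)/(F‖g_j‖²)`, either a `δ'`-relative solution is found or
the bound gap has shrunk by the factor `B`. -/
theorem subgradient_descent_slb_dichotomy {n : ℕ} (Q : Set (EuclideanSpace ℝ (Fin n)))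
    (hQne : Q.Nonempty) (hQcl : IsClosed Q) (hQcv : Convex ℝ Q)
    (f : EuclideanSpace ℝ (Fin n) → ℝ) (hfc : ConvexOn ℝ Q f)
    (fstar : ℝ) (hattain : ∃ z ∈ Q, f z = fstar) (hmin : ∀ z ∈ Q, fstar ≤ f z)
    (fslb : ℝ) (hslb : fslb < fstar)
    (G M : ℝ) (hG : 0 < G)
    (hgrow : ∀ z ∈ Q, Metric.infDist z {w ∈ Q | f w = fstar} ≤ G * (f z - fslb))
    (δ B F : ℝ) (hδ : δ ∈ Set.Ioo (0 : ℝ) 1) (hB : B ∈ Set.Ioo (0 : ℝ) 1)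
    (hF : 1 / (2 * B) < F)
    (x g : ℕ → EuclideanSpace ℝ (Fin n)) (α : ℕ → ℝ)
    (hx0 : x 0 ∈ Q)
    (hsub : ∀ j, ∀ w ∈ Q, f (x j) + ⟪g j, w - x j⟫ ≤ f w)
    (hgM : ∀ j, ‖g j‖ ≤ M)
    (hα : ∀ j, α j = if g j = 0 then 0 else δ * (f (x 0) - fslb) / (F * ‖g j‖ ^ 2))
    (hupd : ∀ j, IsProj Q (x j - α j • g j) (x (j + 1))) :
    ((Finset.range (⌊F * M ^ 2 * G ^ 2 / (2 * δ ^ 2 * (B - 1 / (2 * F)))⌋₊ + 1)).inf'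
        Finset.nonempty_range_add_one (fun l => f (x l)) - fstar) / (fstar - fslb) ≤ δ / (1 - δ) ∨
    (Finset.range (⌊F * M ^ 2 * G ^ 2 / (2 * δ ^ 2 * (B - 1 / (2 * F)))⌋₊ + 1)).inf'
        Finset.nonempty_range_add_one (fun l => f (x l)) - fslb ≤ B * (f (x 0) - fslb) := by
  obtain ⟨hδ0, hδ1⟩ := hδ
  obtain ⟨hB0, hB1⟩ := hB
  have hF0 : 0 < F := lt_trans (by positivity) hF
  have hBF : 0 < B - 1 / (2 * F) := by
    have h1 : 1 < F * (2 * B) := (div_lt_iff₀ (by positivity)).mp hF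
    have h2 : 1 / (2 * F) < B := (div_lt_iff₀ (by positivity)).mpr (by linarith)
    linarith
  set R : ℝ := F * M ^ 2 * G ^ 2 / (2 * δ ^ 2 * (B - 1 / (2 * F))) with hR
  set W : ℕ := ⌊R⌋₊ with hWdef
  set fb : ℝ := (Finset.range (W + 1)).inf' Finset.nonempty_range_add_one (fun l => f (x l))
    with hfb
  set Δ : ℝ := f (x 0) - fslb with hΔ
  clear_value Δ
  have hΔpos : 0 < Δ := by
    have := hmin (x 0) hx0
    simp only [hΔ]; linarith
  have hsf : 0 < fstar - fslb := by linarith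
  by_contra hcon
  push_neg at hcon
  obtain ⟨hA, hB2⟩ := hcon
  -- bounds on all iterates up to W
  have hfk : ∀ k : ℕ, k ≤ W → fb ≤ f (x k) := by
    intro k hk
    exact Finset.inf'_le _ (Finset.mem_range.mpr (by omega))
  have hA' : δ * (fstar - fslb) < (fb - fstar) * (1 - δ) :=
    (div_lt_div_iff₀ (by linarith) hsf).mp hA
  -- case: some zero subgradient up to W
  by_cases hex : ∃ j, j ≤ W ∧ g j = 0
  · obtain ⟨j, hjW, hgj⟩ := hex
    obtain ⟨z, hzQ, hfz⟩ := hattain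
    have h1 := hsub j z hzQ
    rw [hgj, inner_zero_left] at h1
    have h2 : fb ≤ fstar := le_trans (hfk j hjW) (by linarith)
    have h3 : (fb - fstar) / (fstar - fslb) ≤ 0 :=
      div_nonpos_of_nonpos_of_nonneg (by linarith) hsf.le
    have h4 : 0 ≤ δ / (1 - δ) := div_nonneg hδ0.le (by linarith)
    linarith
  · push_neg at hex
    have hM0 : 0 < M := lt_of_lt_of_le (norm_pos_iff.mpr (hex 0 (Nat.zero_le _))) (hgM 0)
    set c : ℝ := 2 * δ ^ 2 * Δ ^ 2 * (B - 1 / (2 * F)) / (F * M ^ 2) with hc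
    have hcpos : 0 < c := by positivity
    have hRc : R * c = G ^ 2 * Δ ^ 2 := by
      have hq1 : 0 < 2 * δ ^ 2 * (B - 1 / (2 * F)) := by
        have : 0 < 2 * δ ^ 2 := by positivity
        exact mul_pos this hBF
      have hden : (0:ℝ) < 2 * δ ^ 2 * (B - 1 / (2 * F)) * (F * M ^ 2) :=
        mul_pos hq1 (by positivity)
      rw [hR, hc, div_mul_div_comm, div_eq_iff hden.ne']
      ring
    have hWR : R < (W : ℝ) + 1 := by
      rw [hWdef]; exact_mod_cast Nat.lt_floor_add_one R
    have hWc : G ^ 2 * Δ ^ 2 < ((W : ℝ) + 1) * c := by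
      rw [← hRc]
      exact mul_lt_mul_of_pos_right hWR hcpos
    -- pick a near-optimal point
    have hOptne : {w ∈ Q | f w = fstar}.Nonempty := by
      obtain ⟨z, hzQ, hfz⟩ := hattain
      exact ⟨z, hzQ, hfz⟩
    have hsqrt : G * Δ < Real.sqrt (((W : ℝ) + 1) * c) := by
      rw [Real.lt_sqrt (by positivity), mul_pow]
      exact hWc
    have hinf : Metric.infDist (x 0) {w ∈ Q | f w = fstar} < Real.sqrt (((W : ℝ) + 1) * c) := by
      have h1 := hgrow (x 0) hx0
      rw [← hΔ] at h1
      exact lt_of_le_of_lt h1 hsqrt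
    obtain ⟨xs, hxsOpt, hxsd⟩ := (Metric.infDist_lt_iff hOptne).mp hinf
    obtain ⟨hxsQ, hfxs⟩ := hxsOpt
    have h0sq : ‖x 0 - xs‖ ^ 2 < ((W : ℝ) + 1) * c := by
      rw [dist_eq_norm] at hxsd
      have := pow_lt_pow_left₀ hxsd (norm_nonneg _) (two_ne_zero)
      rwa [Real.sq_sqrt (by positivity)] at this
    -- per-step decrease
    have step : ∀ k : ℕ, k ≤ W → ‖x (k + 1) - xs‖ ^ 2 ≤ ‖x k - xs‖ ^ 2 - c := by
      intro k hk
      have hgk : g k ≠ 0 := hex k hk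
      have hgk0 : 0 < ‖g k‖ := norm_pos_iff.mpr hgk
      have hgk2 : 0 < ‖g k‖ ^ 2 := by positivity
      have hαk : α k = δ * Δ / (F * ‖g k‖ ^ 2) := by
        rw [hα k, if_neg hgk]
      have hαpos : 0 < α k := by rw [hαk]; positivity
      have hαg : α k * ‖g k‖ ^ 2 = δ * Δ / F := by
        rw [hαk, div_mul_eq_mul_div, mul_comm F (‖g k‖ ^ 2), ← div_div,
          mul_div_assoc, div_self hgk2.ne', mul_one]
      have hαlb : δ * Δ / (F * M ^ 2) ≤ α k := by
        rw [hαk]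
        refine div_le_div_of_nonneg_left (by positivity) (by positivity) ?_
        exact mul_le_mul_of_nonneg_left (pow_le_pow_left₀ (norm_nonneg _) (hgM k) 2) hF0.le
      -- subgradient inequality at xs
      have hsg : f (x k) - fstar ≤ ⟪g k, x k - xs⟫ := by
        have h1 := hsub k xs hxsQ
        have h2 : ⟪g k, xs - x k⟫ = -⟪g k, x k - xs⟫ := by
          rw [show xs - x k = -(x k - xs) by abel, inner_neg_right]
        rw [h2, hfxs] at h1
        linarith
      -- projection contraction + expansion
      have hstep0 : ‖x (k + 1) - xs‖ ^ 2 ≤ ‖x k - α k • g k - xs‖ ^ 2 :=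
        isProj_norm_le hQcv (hupd k) hxsQ
      have hexp : ‖x k - α k • g k - xs‖ ^ 2
          = ‖x k - xs‖ ^ 2 - 2 * α k * ⟪g k, x k - xs⟫ + (α k) ^ 2 * ‖g k‖ ^ 2 := by
        have heq : x k - α k • g k - xs = (x k - xs) - α k • g k := by abel
        rw [heq, norm_sub_sq_real, real_inner_smul_right, norm_smul, mul_pow,
          Real.norm_eq_abs, sq_abs, real_inner_comm]
        ring
      -- value bounds at x k
      have hfbk := hfk k hk
      have hkey1 : δ * (f (x k) - fslb) < f (x k) - fstar := by
        have h2 : (1 - δ) * fb ≤ (1 - δ) * f (x k) :=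
          mul_le_mul_of_nonneg_left hfbk (by linarith)
        linarith [hA', h2]
      have hkey2 : B * Δ < f (x k) - fslb := by
        simp only [hΔ] at hB2 ⊢
        linarith
      have hkey3 : δ * (B * Δ) < f (x k) - fstar :=
        lt_trans (mul_lt_mul_of_pos_left hkey2 hδ0) hkey1
      set d : ℝ := 2 * δ * Δ * (B - 1 / (2 * F)) with hd
      clear_value d
      have hdpos : 0 < d := by
        rw [hd]; exact mul_pos (by positivity) hBF
      have hd2 : d ≤ 2 * (f (x k) - fstar) - δ * Δ / F := by
        have hdeq : d = 2 * δ * Δ * B - δ * Δ / F := by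
          rw [hd]; ring
        rw [hdeq]; linarith [hkey3]
      have hprod : δ * Δ / (F * M ^ 2) * d ≤ α k * (2 * (f (x k) - fstar) - δ * Δ / F) :=
        mul_le_mul hαlb hd2 hdpos.le hαpos.le
      have hceq : c = δ * Δ / (F * M ^ 2) * d := by
        rw [hc, hd]; ring
      have hF3 : (α k) ^ 2 * ‖g k‖ ^ 2 = α k * (δ * Δ / F) := by
        rw [show (α k) ^ 2 * ‖g k‖ ^ 2 = α k * (α k * ‖g k‖ ^ 2) by ring, hαg]
      have hF5 : 2 * α k * (f (x k) - fstar) ≤ 2 * α k * ⟪g k, x k - xs⟫ :=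
        mul_le_mul_of_nonneg_left hsg (by positivity)
      rw [hexp, hF3] at hstep0
      have hring : α k * (2 * (f (x k) - fstar) - δ * Δ / F)
          = 2 * α k * (f (x k) - fstar) - α k * (δ * Δ / F) := by ring
      rw [hring] at hprod
      linarith [hstep0, hF5, hprod]
    -- telescoping
    have bound : ∀ j : ℕ, j ≤ W + 1 → ‖x j - xs‖ ^ 2 ≤ ‖x 0 - xs‖ ^ 2 - j * c := by
      intro j
      induction j with
      | zero => intro _; simp
      | succ k ih =>
        intro hk
        have h1 := ih (by omega)
        have h2 := step k (by omega)
        push_cast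
        linarith
    have hfin := bound (W + 1) le_rfl
    push_cast at hfin
    linarith [sq_nonneg ‖x (W + 1) - xs‖, h0sq, hfin]
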